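/- For an infinite group G with identity e and a subset A of G, the combinatorial derivation ∆(A) = {g ∈ G : gA ∩ A is infinite} satisfies: (1) A is finite if and only if ∆(A) = ∅; (2) ∆(A) = {e} if and only if A is infinite and thin; (3) if A is thick then ∆(A) = G; (4) if A is prethick then ∆(A) is large. -/

import Mathlib

open Pointwise

/-- The combinatorial derivation `∆(A) = {g ∈ G : gA ∩ A is infinite}`. -/
def combDer {G : Type*} [Group G] (A : Set G) : Set G :=
  {g : G | (g • A ∩ A).Infinite}

/-- A subset `A` of a group `G` is large if `G = F * A` for some finite `F ⊆ G`. -/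
def IsLargeSub {G : Type*} [Group G] (A : Set G) : Prop :=
  ∃ F : Finset G, (F : Set G) * A = Set.univ

/-- A subset `A` of a group `G` is thick if for every finite `F ⊆ G` there is
`a ∈ A` with `F * a ⊆ A`. -/
def IsThickSub {G : Type*} [Group G] (A : Set G) : Prop :=
  ∀ F : Finset G, ∃ a ∈ A, (F : Set G) * ({a} : Set G) ⊆ A

/-- A subset `A` of a group `G` is prethick if `F * A` is thick for some finite `F`. -/
def IsPrethickSub {G : Type*} [Group G] (A : Set G) : Prop :=
  ∃ F : Finset G, IsThickSub ((F : Set G) * A)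

/-- A subset `A` of a group `G` is thin if `gA ∩ A` is finite for each `g ≠ 1`. -/
def IsThinSub {G : Type*} [Group G] (A : Set G) : Prop :=
  ∀ g : G, g ≠ 1 → (g • A ∩ A).Finite

lemma infinite_of_arbitrarily_large' {G : Type*} {V : Set G}
    (h : ∀ n : ℕ, ∃ T : Finset G, n ≤ T.card ∧ ↑T ⊆ V) : V.Infinite := by
  by_contra hfin
  rw [Set.not_infinite] at hfin
  obtain ⟨T, hn, hsub⟩ := h (hfin.toFinset.card + 1)
  have hsub' : T ⊆ hfin.toFinset := fun x hx => hfin.mem_toFinset.2 (hsub hx)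
  have := Finset.card_le_card hsub'
  omega

/-- A set of `n` elements, pairwise inequivalent under `F⁻¹`-translates. -/
lemma exists_sep {G : Type*} [Group G] [Infinite G] (F : Finset G) (n : ℕ) :
    ∃ S : Finset G, S.card = n ∧
      ∀ s ∈ S, ∀ s' ∈ S, ∀ f1 ∈ F, ∀ f2 ∈ F, f1⁻¹ * s = f2⁻¹ * s' → s = s' := by
  classical
  induction n with
  | zero => exact ⟨∅, rfl, by simp⟩
  | succ n ih =>
    obtain ⟨S, hcard, hP⟩ := ih
    have hfin : (((F : Set G) * (F : Set G)⁻¹ * (S : Set G)) ∪ (S : Set G)).Finite :=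
      ((F.finite_toSet.mul F.finite_toSet.inv).mul S.finite_toSet).union S.finite_toSet
    obtain ⟨x, hx⟩ := (Set.infinite_univ.diff hfin).nonempty
    have hxK := hx.2
    have hxS : x ∉ S := fun h => hxK (Or.inr h)
    refine ⟨insert x S, by rw [Finset.card_insert_of_notMem hxS, hcard], ?_⟩
    intro s hs s' hs' f1 hf1 f2 hf2 heq
    rcases Finset.mem_insert.1 hs with hsx | hs0 <;>
      rcases Finset.mem_insert.1 hs' with hs'x | hs'0
    · rw [hsx, hs'x]
    · exfalso
      rw [hsx] at heq
      have hx' : x = f1 * f2⁻¹ * s' := by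
        rw [mul_assoc, ← heq, mul_inv_cancel_left]
      exact hxK (Or.inl (hx' ▸ Set.mul_mem_mul
        (Set.mul_mem_mul hf1 (Set.inv_mem_inv.2 hf2)) hs'0))
    · exfalso
      rw [hs'x] at heq
      have hx' : x = f2 * f1⁻¹ * s := by
        rw [mul_assoc, heq, mul_inv_cancel_left]
      exact hxK (Or.inl (hx' ▸ Set.mul_mem_mul
        (Set.mul_mem_mul hf2 (Set.inv_mem_inv.2 hf1)) hs0))
    · exact hP s hs0 s' hs'0 f1 hf1 f2 hf2 heq

/-- Key lemma: if `F * A` is thick then for each `g` some translate `f⁻¹g` lies in `∆(A)`. -/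
lemma key_lemma {G : Type*} [Group G] [Infinite G] (A : Set G) (F : Finset G)
    (hT : IsThickSub ((F : Set G) * A)) (g : G) :
    ∃ f ∈ F, (((f⁻¹ * g) • A) ∩ A).Infinite := by
  -- Step 1 : `g • A ∩ F * A` is infinite.
  have hV : (g • A ∩ ((F : Set G) * A)).Infinite := by
    apply infinite_of_arbitrarily_large'
    intro n
    obtain ⟨S, hScard, hP⟩ := exists_sep F n
    have hKfin : ((S : Set G) ∪ ({g} : Set G) * (F : Set G)⁻¹ * (S : Set G)).Finite :=
      S.finite_toSet.union
        (((Set.finite_singleton g).mul F.finite_toSet.inv).mul S.finite_toSet)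
    obtain ⟨a, haB, hKa⟩ := hT hKfin.toFinset
    have hmem : ∀ k ∈ ((S : Set G) ∪ ({g} : Set G) * (F : Set G)⁻¹ * (S : Set G)),
        k * a ∈ (F : Set G) * A := by
      intro k hk
      exact hKa (Set.mul_mem_mul (hKfin.mem_toFinset.2 hk) rfl)
    have h1 : ∀ s ∈ S, s * a ∈ (F : Set G) * A := fun s hs => hmem s (Or.inl hs)
    have h2 : ∀ f ∈ F, ∀ s ∈ S, g * f⁻¹ * s * a ∈ (F : Set G) * A := by
      intro f hf s hs
      exact hmem _ (Or.inr (Set.mul_mem_mul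
        (Set.mul_mem_mul rfl (Set.inv_mem_inv.2 hf)) hs))
    -- choice of decompositions
    have hex : ∀ s : G, s ∈ S → ∃ f, f ∈ F ∧ ∃ y, y ∈ A ∧ f * y = s * a := by
      intro s hs
      have := h1 s hs
      rw [Set.mem_mul] at this
      obtain ⟨f, hf, y, hy, hfy⟩ := this
      exact ⟨f, hf, y, hy, hfy⟩
    classical
    let φ : G → G := fun s =>
      if h : ∃ f, f ∈ F ∧ ∃ y, y ∈ A ∧ f * y = s * a then h.choose else 1
    have hφ : ∀ s ∈ S, φ s ∈ F ∧ ∃ y, y ∈ A ∧ φ s * y = s * a := by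
      intro s hs
      have h := hex s hs
      simp only [φ, dif_pos h]
      exact h.choose_spec
    refine ⟨S.image (fun s => g * ((φ s)⁻¹ * (s * a))), ?_, ?_⟩
    · rw [Finset.card_image_of_injOn, hScard]
      intro s hs s' hs' heq
      have heq' : (φ s)⁻¹ * (s * a) = (φ s')⁻¹ * (s' * a) := mul_left_cancel heq
      rw [← mul_assoc, ← mul_assoc] at heq'
      have heq'' : (φ s)⁻¹ * s = (φ s')⁻¹ * s' := mul_right_cancel heq'
      exact hP s hs s' hs' (φ s) (hφ s hs).1 (φ s') (hφ s' hs').1 heq''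
    · intro v hv
      simp only [Finset.coe_image, Set.mem_image, Finset.mem_coe] at hv
      obtain ⟨s, hs, rfl⟩ := hv
      obtain ⟨hφF, y, hyA, hy⟩ := hφ s hs
      have hyval : (φ s)⁻¹ * (s * a) = y := by rw [← hy, inv_mul_cancel_left]
      constructor
      · rw [hyval]
        exact Set.smul_mem_smul_set hyA
      · have : g * ((φ s)⁻¹ * (s * a)) = g * (φ s)⁻¹ * s * a := by
          rw [mul_assoc, mul_assoc]
        rw [this]
        exact h2 (φ s) hφF s hs
  -- Step 2 : pigeonhole over `f ∈ F`.
  by_contra hcon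
  push_neg at hcon
  have hsub : (g • A ∩ ((F : Set G) * A)) ⊆ ⋃ f ∈ (F : Set G), (g • A ∩ f • A) := by
    rintro v ⟨hv1, hv2⟩
    rw [Set.mem_mul] at hv2
    obtain ⟨f, hf, y, hy, hfy⟩ := hv2
    exact Set.mem_biUnion hf ⟨hv1, ⟨y, hy, hfy⟩⟩
  have hfin : (⋃ f ∈ (F : Set G), (g • A ∩ f • A)).Finite := by
    apply Set.Finite.biUnion F.finite_toSet
    intro f hf
    have := hcon f hf
    have heqset : (f⁻¹ * g) • A ∩ A = f⁻¹ • (g • A ∩ f • A) := by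
      rw [Set.smul_set_inter, smul_smul, smul_smul, inv_mul_cancel, one_smul]
    have : (f⁻¹ • (g • A ∩ f • A)).Finite := heqset ▸ this
    have := this.smul_set (a := f)
    rwa [smul_smul, mul_inv_cancel, one_smul] at this
  exact hV (hfin.subset hsub)

theorem combDer_basic_properties
    {G : Type*} [Group G] [Infinite G] (A : Set G) :
    (A.Finite ↔ combDer A = ∅) ∧
    (combDer A = {(1 : G)} ↔ A.Infinite ∧ IsThinSub A) ∧
    (IsThickSub A → combDer A = Set.univ) ∧
    (IsPrethickSub A → IsLargeSub (combDer A)) := by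
  have hone : ∀ (B : Set G), (1 : G) • B ∩ B = B := by
    intro B; rw [one_smul, Set.inter_self]
  refine ⟨?_, ?_, ?_, ?_⟩
  · constructor
    · intro hA
      ext g
      simp only [combDer, Set.mem_setOf_eq, Set.mem_empty_iff_false, iff_false]
      rw [Set.not_infinite]
      exact hA.subset Set.inter_subset_right
    · intro h
      have h1 : (1 : G) ∉ combDer A := h ▸ Set.notMem_empty _
      simp only [combDer, Set.mem_setOf_eq, Set.not_infinite, hone] at h1
      exact h1
  · constructor
    · intro h
      constructor
      · have h1 : (1 : G) ∈ combDer A := h ▸ rfl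
        simpa only [combDer, Set.mem_setOf_eq, hone] using h1
      · intro g hg
        have : g ∉ combDer A := by
          rw [h]; simpa using hg
        simpa only [combDer, Set.mem_setOf_eq, Set.not_infinite] using this
    · rintro ⟨hAinf, hthin⟩
      ext g
      simp only [combDer, Set.mem_setOf_eq, Set.mem_singleton_iff]
      constructor
      · intro hg
        by_contra hne
        exact hg (hthin g hne)
      · rintro rfl
        rw [hone]
        exact hAinf
  · intro hthick
    have hT : IsThickSub ((({1} : Finset G) : Set G) * A) := by
      have : (({1} : Finset G) : Set G) * A = A := by
        rw [Finset.coe_singleton, Set.singleton_mul]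
        simp [one_smul]
      rwa [this]
    ext g
    simp only [Set.mem_univ, iff_true]
    obtain ⟨f, hf, hinf⟩ := key_lemma A {1} hT g
    rw [Finset.mem_singleton] at hf
    subst hf
    rw [inv_one, one_mul] at hinf
    exact hinf
  · rintro ⟨F, hT⟩
    refine ⟨F, ?_⟩
    ext g
    simp only [Set.mem_univ, iff_true]
    obtain ⟨f, hf, hinf⟩ := key_lemma A F hT g
    rw [Set.mem_mul]
    exact ⟨f, hf, f⁻¹ * g, hinf, mul_inv_cancel_left f g⟩
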